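/- arXiv:1503.06718 — 8 statements merged into one kernel-verified Lean document; each statement's English description precedes it below -/
import Mathlib

section
/- The set X_d = { e(k) - e(i) - e(j) : (i,j,k) ∈ {1,...,d}^3 such that d divides k - i - j }, where e(i) denotes the i-th standard basis vector of ℤ^d, has cardinality d(d-1)/2 + 1. -/
/-- The `i`-th standard basis vector of `ℤ^d`. -/
def stdBasis (d : ℕ) (i : Fin d) : Fin d → ℤ := fun j => if j = i then 1 else 0

/-- The set `X_d = { e(k) - e(i) - e(j) : i,j,k ∈ {1,…,d}, d ∣ k - i - j }`
(indices written 1-based; here `Fin d` values represent `i+1` etc.). -/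
def Xset (d : ℕ) : Set (Fin d → ℤ) :=
  { x | ∃ i j k : Fin d,
      (d : ℤ) ∣ (((k : ℕ) : ℤ) - ((i : ℕ) : ℤ) - ((j : ℕ) : ℤ) - 1) ∧
      x = stdBasis d k - stdBasis d i - stdBasis d j }

/-- Membership in `Λ_d = ℤ_{≥0}^d`. -/
def nonneg {d : ℕ} (v : Fin d → ℤ) : Prop := ∀ i, 0 ≤ v i

/-- The covering relation `v ⋖ w` on `Λ_d`: `v = w + x` for some `x ∈ X_d`. -/
def covRel (d : ℕ) (v w : Fin d → ℤ) : Prop :=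
  nonneg v ∧ nonneg w ∧ ∃ x ∈ Xset d, v = w + x

/-- The order `≺` on `Λ_d`: transitive closure of the covering relation. -/
def precR (d : ℕ) : (Fin d → ℤ) → (Fin d → ℤ) → Prop :=
  Relation.TransGen (covRel d)

/-- The principal ideal `I(v) = {v} ∪ {w : w ≺ v}`. -/
def idealG (d : ℕ) (v : Fin d → ℤ) : Set (Fin d → ℤ) := {v} ∪ { w | precR d w v }

/-- `n·e(1)` in `ℤ^d`. -/
def nE1 (d n : ℕ) : Fin d → ℤ := fun j => if (j : ℕ) = 0 then (n : ℤ) else 0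

/-- `C_n^{(d)} = |I(n·e(1))|`. -/
noncomputable def Cnum (d n : ℕ) : ℕ := (idealG d (nE1 d n)).ncard

/-- The congruence class `Λ_{d,k}` (with `k ∈ Fin d` representing `k+1 ∈ {1,…,d}`). -/
def Lclass (d : ℕ) (k : Fin d) : Set (Fin d → ℤ) :=
  { v | nonneg v ∧ (d : ℤ) ∣ ((∑ i : Fin d, ((i.val : ℤ) + 1) * v i) - (((k : ℕ) : ℤ) + 1)) }



namespace Stmt0Aux

variable {d : ℕ}

def kOf (hd : 0 < d) (i j : Fin d) : Fin d := ⟨(i.val + j.val + 1) % d, Nat.mod_lt _ hd⟩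

lemma kOf_val (hd : 0 < d) (i j : Fin d) :
    (kOf hd i j).val = if i.val + j.val + 1 < d then i.val + j.val + 1 else i.val + j.val + 1 - d := by
  have hi := i.isLt; have hj := j.isLt
  simp only [kOf]
  split
  · exact Nat.mod_eq_of_lt (by omega)
  · rw [Nat.mod_eq_sub_mod (by omega)]
    exact Nat.mod_eq_of_lt (by omega)

def f (hd : 0 < d) (i j : Fin d) : Fin d → ℤ :=
  stdBasis d (kOf hd i j) - stdBasis d i - stdBasis d j

lemma f_apply (hd : 0 < d) (i j t : Fin d) :
    f hd i j t = (if t = kOf hd i j then 1 else 0) - (if t = i then 1 else 0)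
      - (if t = j then 1 else 0) := rfl

lemma f_comm (hd : 0 < d) (i j : Fin d) : f hd i j = f hd j i := by
  have : kOf hd i j = kOf hd j i := by
    simp only [kOf, Nat.add_comm i.val j.val]
  funext t
  simp only [f_apply, this]
  ring

def last' (hd : 0 < d) : Fin d := ⟨d - 1, by omega⟩

def vneg (hd : 0 < d) : Fin d → ℤ := fun t => if t = last' hd then -1 else 0

lemma f_last (hd : 0 < d) (i : Fin d) : f hd i (last' hd) = vneg hd := by
  have hk : kOf hd i (last' hd) = i := by
    apply Fin.ext
    rw [kOf_val]
    have := i.isLt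
    rw [if_neg (by simp only [last']; omega)]
    simp only [last']
    omega
  funext t
  simp only [f_apply, hk, vneg]
  split_ifs <;> omega

lemma kOf_ne (hd : 0 < d) {i j : Fin d} (hij : i ≤ j) (hj : j.val + 1 < d) :
    kOf hd i j ≠ i ∧ kOf hd i j ≠ j := by
  have hK := kOf_val hd i j
  have hij' : i.val ≤ j.val := hij
  constructor <;> intro h <;> rw [h] at hK <;> [skip; skip] <;>
    (split_ifs at hK <;> omega)

lemma f_neg_iff (hd : 0 < d) {i j : Fin d} (hij : i ≤ j) (hj : j.val + 1 < d) (t : Fin d) :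
    f hd i j t < 0 ↔ t = i ∨ t = j := by
  obtain ⟨h1, h2⟩ := kOf_ne hd hij hj
  rw [f_apply]
  constructor
  · intro h
    by_contra hc
    push_neg at hc
    simp [hc.1, hc.2] at h
    split_ifs at h <;> omega
  · rintro (rfl | rfl)
    · simp [Ne.symm h1]
      split_ifs <;> omega
    · simp [Ne.symm h2]
      split_ifs <;> omega

lemma f_at_k (hd : 0 < d) {i j : Fin d} (hij : i ≤ j) (hj : j.val + 1 < d) :
    f hd i j (kOf hd i j) = 1 := by
  obtain ⟨h1, h2⟩ := kOf_ne hd hij hj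
  simp [f_apply, h1, h2]

def P (hd : 0 < d) : Finset (Fin d × Fin d) :=
  Finset.univ.filter (fun p => p.1 ≤ p.2 ∧ p.2.val + 1 < d)

lemma injOn_P (hd : 0 < d) : Set.InjOn (fun p : Fin d × Fin d => f hd p.1 p.2) (P hd) := by
  rintro ⟨i, j⟩ hij ⟨i', j'⟩ hij' heq
  simp only [P, Finset.coe_filter, Finset.mem_coe, Finset.mem_univ, true_and,
    Set.mem_setOf_eq] at hij hij'
  obtain ⟨h1, h2⟩ := hij
  obtain ⟨h1', h2'⟩ := hij'
  simp only at heq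
  have key : ∀ t : Fin d, (t = i ∨ t = j) ↔ (t = i' ∨ t = j') := by
    intro t
    rw [← f_neg_iff hd h1 h2 t, ← f_neg_iff hd h1' h2' t, heq]
  have ki := (key i).mp (Or.inl rfl)
  have kj := (key j).mp (Or.inr rfl)
  have ki' := (key i').mpr (Or.inl rfl)
  have kj' := (key j').mpr (Or.inr rfl)
  have h1v : i.val ≤ j.val := h1
  have h1v' : i'.val ≤ j'.val := h1'
  have kiv := ki.imp (congrArg Fin.val) (congrArg Fin.val)
  have kjv := kj.imp (congrArg Fin.val) (congrArg Fin.val)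
  have kiv' := ki'.imp (congrArg Fin.val) (congrArg Fin.val)
  have kjv' := kj'.imp (congrArg Fin.val) (congrArg Fin.val)
  have e1 : i.val = i'.val ∧ j.val = j'.val := by
    rcases kiv with h | h <;> rcases kjv with h2 | h2 <;>
      rcases kiv' with h3 | h3 <;> rcases kjv' with h4 | h4 <;> omega
  exact Prod.ext (Fin.ext e1.1) (Fin.ext e1.2)

lemma vneg_not_mem (hd : 0 < d) :
    vneg hd ∉ (P hd).image (fun p : Fin d × Fin d => f hd p.1 p.2) := by
  intro h
  simp only [Finset.mem_image] at h
  obtain ⟨⟨i, j⟩, hp, heq⟩ := h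
  simp only [P, Finset.mem_filter, Finset.mem_univ, true_and] at hp
  have := f_at_k hd hp.1 hp.2
  rw [heq] at this
  simp only [vneg] at this
  split_ifs at this <;> omega

lemma card_P (hd : 0 < d) : (P hd).card = d * (d - 1) / 2 := by
  have hbij : (P hd).card = ((Finset.range (d - 1)).sigma fun j => Finset.range (j + 1)).card := by
    apply Finset.card_bij (fun p _ => ⟨p.2.val, p.1.val⟩)
    · rintro ⟨i, j⟩ hp
      simp only [P, Finset.mem_filter, Finset.mem_univ, true_and] at hp
      simp only [Finset.mem_sigma, Finset.mem_range]
      have : i.val ≤ j.val := hp.1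
      omega
    · rintro ⟨i, j⟩ hp ⟨i', j'⟩ hp' h
      simp only [Sigma.mk.inj_iff, heq_eq_eq] at h
      exact Prod.ext (Fin.ext h.2) (Fin.ext h.1)
    · rintro ⟨j, i⟩ hs
      simp only [Finset.mem_sigma, Finset.mem_range] at hs
      refine ⟨(⟨i, by omega⟩, ⟨j, by omega⟩), ?_, rfl⟩
      simp only [P, Finset.mem_filter, Finset.mem_univ, true_and]
      refine ⟨Fin.mk_le_mk.mpr (by omega), ?_⟩
      show j + 1 < d
      omega
  rw [hbij, Finset.card_sigma]
  simp only [Finset.card_range]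
  have h2 : (∑ j ∈ Finset.range (d - 1), (j + 1)) * 2 = d * (d - 1) := by
    have := Finset.sum_range_id_mul_two d
    have hs : ∑ i ∈ Finset.range d, i = ∑ j ∈ Finset.range (d - 1), (j + 1) := by
      rcases Nat.exists_eq_add_of_le hd with ⟨n, rfl⟩
      simp only [Nat.add_sub_cancel_left] at *
      rw [Nat.add_comm 1 n, Finset.sum_range_succ']
      simp
    rw [hs] at this
    exact this
  omega


lemma mem_Xset_iff (hd : 0 < d) (x : Fin d → ℤ) :
    x ∈ Xset d ↔ ∃ i j, x = f hd i j := by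
  constructor
  · rintro ⟨i, j, k, hdvd, rfl⟩
    refine ⟨i, j, ?_⟩
    have hk : k = kOf hd i j := by
      obtain ⟨m, hm⟩ := hdvd
      have hd' : (0 : ℤ) < d := by exact_mod_cast hd
      have hklt : (k.val : ℤ) < d := by exact_mod_cast k.isLt
      have hilt : (i.val : ℤ) < d := by exact_mod_cast i.isLt
      have hjlt : (j.val : ℤ) < d := by exact_mod_cast j.isLt
      have hk0 : (0 : ℤ) ≤ (k.val : ℤ) := by positivity
      have hi0 : (0 : ℤ) ≤ (i.val : ℤ) := by positivity
      have hj0 : (0 : ℤ) ≤ (j.val : ℤ) := by positivity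
      have hm1 : m < 1 := by
        have h1 : (d : ℤ) * m < d * 1 := by rw [mul_one]; linarith
        exact lt_of_mul_lt_mul_left h1 (le_of_lt hd')
      have hm2 : (-2 : ℤ) < m := by
        have h1 : (d : ℤ) * (-2) < d * m := by
          have : (d : ℤ) * (-2) = -2 * d := by ring
          rw [this]; linarith
        exact lt_of_mul_lt_mul_left h1 (le_of_lt hd')
      have hcase : (k.val : ℤ) = i.val + j.val + 1 ∨ (k.val : ℤ) = i.val + j.val + 1 - d := by
        have : m = 0 ∨ m = -1 := by omega
        rcases this with rfl | rfl
        · left; linarith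
        · right; linarith
      apply Fin.ext
      have hK := kOf_val hd i j
      have hilt' := i.isLt; have hjlt' := j.isLt; have hklt' := k.isLt
      split_ifs at hK with hlt <;> omega
    rw [hk]; rfl
  · rintro ⟨i, j, rfl⟩
    refine ⟨i, j, kOf hd i j, ?_, rfl⟩
    have hK := kOf_val hd i j
    have hilt := i.isLt; have hjlt := j.isLt
    split_ifs at hK with hlt
    · exact ⟨0, by push_cast; omega⟩
    · exact ⟨-1, by push_cast; omega⟩


end Stmt0Aux

open Stmt0Aux in
theorem stmt0 (d : ℕ) (hd : 1 ≤ d) :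
    (Xset d).ncard = d * (d - 1) / 2 + 1 := by
  have hd0 : 0 < d := hd
  set S : Finset (Fin d → ℤ) :=
    insert (vneg hd0) ((P hd0).image fun p : Fin d × Fin d => f hd0 p.1 p.2) with hS
  have hset : Xset d = ↑S := by
    ext x
    rw [mem_Xset_iff hd0]
    simp only [hS, Finset.coe_insert, Set.mem_insert_iff, Finset.coe_image,
      Set.mem_image, Finset.mem_coe, P, Finset.mem_filter, Finset.mem_univ, true_and]
    constructor
    · rintro ⟨i, j, rfl⟩
      wlog hij : i ≤ j generalizing i j
      · rw [f_comm]
        exact this j i (le_of_not_ge hij)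
      by_cases hj : j.val + 1 < d
      · exact Or.inr ⟨(i, j), ⟨hij, hj⟩, rfl⟩
      · left
        have : j = last' hd0 := Fin.ext (by have := j.isLt; simp only [last']; omega)
        rw [this, f_last]
    · rintro (rfl | ⟨⟨i, j⟩, _, rfl⟩)
      · exact ⟨last' hd0, last' hd0, (f_last hd0 (last' hd0)).symm⟩
      · exact ⟨i, j, rfl⟩
  rw [hset, Set.ncard_coe_finset, hS,
    Finset.card_insert_of_notMem (vneg_not_mem hd0),
    Finset.card_image_of_injOn (injOn_P hd0), card_P hd0]
end

section
/- For every v ∈ Λ_{d,k} of height (coordinate sum) at least 2, there exists x ∈ X_d such that v + x ∈ ℤ_{≥0}^d; consequently, by induction, e(k) ≺ v (respectively 0 ≺ v when k = d) for all such v, i.e., each poset Λ_{d,k} is connected with minimum element e(k) for k ≠ d and minimum element 0 for k = d. -/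
open Finset

lemma sum_std (d : ℕ) (t : Fin d) : ∑ m : Fin d, stdBasis d t m = 1 := by
  simp [stdBasis]

lemma wsum_std (d : ℕ) (t : Fin d) :
    ∑ m : Fin d, ((m.val : ℤ) + 1) * stdBasis d t m = (t.val : ℤ) + 1 := by
  simp [stdBasis, mul_ite, Finset.sum_ite_eq']

lemma std_nonneg (d : ℕ) (t : Fin d) : nonneg (stdBasis d t) := by
  intro m; unfold stdBasis; split <;> norm_num

lemma step_lemma (d : ℕ) (hd : 1 ≤ d) (k : Fin d) (v : Fin d → ℤ)
    (hv : v ∈ Lclass d k) (h2 : 2 ≤ ∑ i : Fin d, v i) :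
    ∃ x ∈ Xset d, (v + x) ∈ Lclass d k ∧
      ∑ i : Fin d, (v + x) i = (∑ i : Fin d, v i) - 1 := by
  -- find i with v i ≥ 1
  have hex : ∃ i, 1 ≤ v i := by
    by_contra hc
    push_neg at hc
    have : ∑ i : Fin d, v i ≤ 0 := Finset.sum_nonpos (fun i _ => by linarith [hc i])
    linarith
  obtain ⟨i, hi⟩ := hex
  -- find i j with 1 ≤ v i, 1 ≤ v j, and (i = j → 2 ≤ v i)
  obtain ⟨j, hj, hij⟩ : ∃ j, 1 ≤ v j ∧ (i = j → 2 ≤ v i) := by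
    rcases le_or_gt 2 (v i) with h | h
    · exact ⟨i, by linarith, fun _ => h⟩
    · have hvi1 : v i = 1 := le_antisymm (by linarith) hi
      have hsum : ∑ m ∈ Finset.univ.erase i, v m = (∑ m : Fin d, v m) - v i := by
        have := Finset.sum_erase_add Finset.univ v (Finset.mem_univ i)
        linarith
      have hex2 : ∃ j ∈ Finset.univ.erase i, 1 ≤ v j := by
        by_contra hc
        push_neg at hc
        have : ∑ m ∈ Finset.univ.erase i, v m ≤ 0 :=
          Finset.sum_nonpos (fun m hm => by linarith [hc m hm])
        rw [hsum, hvi1] at this; linarith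
      obtain ⟨j, hjmem, hj1⟩ := hex2
      have hji : j ≠ i := Finset.ne_of_mem_erase hjmem
      exact ⟨j, hj1, fun hij => absurd hij.symm hji⟩
  set a : ℕ := i.val + j.val + 1 with ha
  set k' : Fin d := ⟨a % d, Nat.mod_lt _ hd⟩ with hk'
  set x : Fin d → ℤ := stdBasis d k' - stdBasis d i - stdBasis d j with hx
  have hdvd : (d : ℤ) ∣ (((k' : ℕ) : ℤ) - ((i : ℕ) : ℤ) - ((j : ℕ) : ℤ) - 1) := by
    have h1 : ((k' : ℕ) : ℤ) = (a : ℤ) % d := by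
      simp only [hk']; push_cast; ring
    have h2 : ((k' : ℕ) : ℤ) - ((i : ℕ) : ℤ) - ((j : ℕ) : ℤ) - 1 = (a : ℤ) % d - a := by
      rw [h1]; push_cast [ha]; ring
    rw [h2]
    have := Int.emod_add_mul_ediv (a : ℤ) d
    exact ⟨-((a : ℤ) / d), by linarith⟩
  have hxX : x ∈ Xset d := ⟨i, j, k', hdvd, rfl⟩
  have hnn : nonneg (v + x) := by
    intro m
    have h0 := hv.1 m
    simp only [hx, Pi.add_apply, Pi.sub_apply, stdBasis]
    rcases eq_or_ne m i with e2 | e2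
    · rcases eq_or_ne m j with e3 | e3
      · have h2vi : 2 ≤ v i := hij (e2 ▸ e3)
        subst e2
        simp only [if_pos rfl, if_pos e3]
        split_ifs <;> linarith
      · subst e2
        simp only [if_pos rfl, if_neg e3]
        split_ifs <;> linarith
    · rcases eq_or_ne m j with e3 | e3
      · subst e3
        simp only [if_pos rfl, if_neg e2]
        split_ifs <;> linarith
      · simp only [if_neg e2, if_neg e3]
        split_ifs <;> linarith
  have hws : ∑ m : Fin d, ((m.val : ℤ) + 1) * (v + x) m
      = (∑ m : Fin d, ((m.val : ℤ) + 1) * v m)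
        + (((k' : ℕ) : ℤ) - ((i : ℕ) : ℤ) - ((j : ℕ) : ℤ) - 1) := by
    have : ∀ m : Fin d, ((m.val : ℤ) + 1) * (v + x) m
        = ((m.val : ℤ) + 1) * v m + (((m.val : ℤ) + 1) * stdBasis d k' m
          - ((m.val : ℤ) + 1) * stdBasis d i m - ((m.val : ℤ) + 1) * stdBasis d j m) := by
      intro m; simp only [hx, Pi.add_apply, Pi.sub_apply]; ring
    rw [Finset.sum_congr rfl (fun m _ => this m), Finset.sum_add_distrib,
      Finset.sum_sub_distrib, Finset.sum_sub_distrib, wsum_std, wsum_std, wsum_std]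
    ring
  have hmem : (v + x) ∈ Lclass d k := by
    refine ⟨hnn, ?_⟩
    rw [hws]
    have := hv.2
    have h3 : (∑ m : Fin d, ((m.val : ℤ) + 1) * v m)
        + (((k' : ℕ) : ℤ) - ((i : ℕ) : ℤ) - ((j : ℕ) : ℤ) - 1) - (((k : ℕ) : ℤ) + 1)
        = ((∑ m : Fin d, ((m.val : ℤ) + 1) * v m) - (((k : ℕ) : ℤ) + 1))
          + (((k' : ℕ) : ℤ) - ((i : ℕ) : ℤ) - ((j : ℕ) : ℤ) - 1) := by ring
    rw [h3]
    exact dvd_add this hdvd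
  have hsum : ∑ m : Fin d, (v + x) m = (∑ m : Fin d, v m) - 1 := by
    have : ∀ m : Fin d, (v + x) m
        = v m + (stdBasis d k' m - stdBasis d i m - stdBasis d j m) := by
      intro m; simp [hx]
    rw [Finset.sum_congr rfl (fun m _ => this m), Finset.sum_add_distrib,
      Finset.sum_sub_distrib, Finset.sum_sub_distrib, sum_std, sum_std, sum_std]
    ring
  exact ⟨x, hxX, hmem, hsum⟩

lemma eq_zero_of (d : ℕ) (v : Fin d → ℤ) (hnn : nonneg v) (h0 : ∑ i : Fin d, v i = 0) :
    v = 0 := by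
  funext m
  exact (Finset.sum_eq_zero_iff_of_nonneg (fun i _ => hnn i)).mp h0 m (Finset.mem_univ m)

lemma eq_std_of (d : ℕ) (hd : 1 ≤ d) (k : Fin d) (v : Fin d → ℤ)
    (hv : v ∈ Lclass d k) (h1 : ∑ i : Fin d, v i = 1) : v = stdBasis d k := by
  obtain ⟨m, hm⟩ : ∃ m, 1 ≤ v m := by
    by_contra hc
    push_neg at hc
    have : ∑ i : Fin d, v i ≤ 0 := Finset.sum_nonpos (fun i _ => by linarith [hc i])
    linarith
  have hsum : ∑ j ∈ Finset.univ.erase m, v j = 1 - v m := by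
    have := Finset.sum_erase_add Finset.univ v (Finset.mem_univ m)
    linarith
  have herge : 0 ≤ ∑ j ∈ Finset.univ.erase m, v j :=
    Finset.sum_nonneg (fun j _ => hv.1 j)
  have hvm : v m = 1 := le_antisymm (by linarith) hm
  have hzero : ∀ j ∈ Finset.univ.erase m, v j = 0 := by
    intro j hj
    exact (Finset.sum_eq_zero_iff_of_nonneg (fun i _ => hv.1 i)).mp
      (by rw [hsum, hvm]; ring) j hj
  have hveq : v = stdBasis d m := by
    funext j
    unfold stdBasis
    by_cases hjm : j = m
    · simp [hjm, hvm]
    · simp [hjm, hzero j (Finset.mem_erase.mpr ⟨hjm, Finset.mem_univ j⟩)]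
  have hws : ∑ i : Fin d, ((i.val : ℤ) + 1) * v i = (m.val : ℤ) + 1 := by
    rw [hveq]; exact wsum_std d m
  have hdvd := hv.2
  rw [hws] at hdvd
  have hmk : ((m.val : ℤ) + 1) - (((k : ℕ) : ℤ) + 1) = (m.val : ℤ) - (k.val : ℤ) := by ring
  rw [hmk] at hdvd
  have hmd : (m.val : ℤ) < d := by exact_mod_cast m.isLt
  have hkd : ((k : ℕ) : ℤ) < d := by exact_mod_cast k.isLt
  have h0 : (m.val : ℤ) - (k.val : ℤ) = 0 := by
    apply Int.eq_zero_of_abs_lt_dvd hdvd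
    rw [abs_lt]
    constructor <;> [linarith [Int.ofNat_nonneg m.val, Int.ofNat_nonneg k.val]; skip]
    linarith [Int.ofNat_nonneg k.val]
  have : m = k := by
    apply Fin.ext
    exact_mod_cast sub_eq_zero.mp h0
  rw [hveq, this]

lemma reach1 (d : ℕ) (hd : 1 ≤ d) (k : Fin d) :
    ∀ n : ℕ, ∀ v ∈ Lclass d k, (∑ i : Fin d, v i).toNat = n → 1 ≤ ∑ i : Fin d, v i →
      v = stdBasis d k ∨ precR d (stdBasis d k) v := by
  intro n
  induction n using Nat.strong_induction_on with
  | _ n ih =>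
    intro v hv hn h1
    rcases eq_or_lt_of_le h1 with heq | hlt
    · exact Or.inl (eq_std_of d hd k v hv heq.symm)
    · have h2 : 2 ≤ ∑ i : Fin d, v i := hlt
      obtain ⟨x, hxX, hmem, hsum⟩ := step_lemma d hd k v hv h2
      have hw1 : 1 ≤ ∑ i : Fin d, (v + x) i := by rw [hsum]; linarith
      have hwn : (∑ i : Fin d, (v + x) i).toNat < n := by
        rw [hsum]; omega
      have hcov : covRel d (v + x) v := ⟨hmem.1, hv.1, x, hxX, rfl⟩
      rcases ih _ hwn (v + x) hmem rfl hw1 with heq | hpr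
      · exact Or.inr (Relation.TransGen.single (heq ▸ hcov))
      · exact Or.inr (Relation.TransGen.tail hpr hcov)

theorem stmt2 (d : ℕ) (hd : 1 ≤ d) (k : Fin d) :
    (∀ v ∈ Lclass d k, 2 ≤ ∑ i : Fin d, v i → ∃ x ∈ Xset d, nonneg (v + x)) ∧
    ((k : ℕ) + 1 ≠ d →
      ∀ v ∈ Lclass d k, v ≠ stdBasis d k → precR d (stdBasis d k) v) ∧
    ((k : ℕ) + 1 = d →
      ∀ v ∈ Lclass d k, v ≠ 0 → precR d 0 v) := by
  refine ⟨?_, ?_, ?_⟩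
  · intro v hv h2
    obtain ⟨x, hxX, hmem, -⟩ := step_lemma d hd k v hv h2
    exact ⟨x, hxX, hmem.1⟩
  · intro hk v hv hne
    have hnn := hv.1
    have hge : 0 ≤ ∑ i : Fin d, v i := Finset.sum_nonneg (fun i _ => hnn i)
    rcases eq_or_lt_of_le hge with h0 | h1
    · -- sum = 0 forces k+1 = d, contradiction
      exfalso
      have hv0 : v = 0 := eq_zero_of d v hnn h0.symm
      have := hv.2
      rw [hv0] at this
      simp only [Pi.zero_apply, mul_zero, Finset.sum_const_zero, zero_sub] at this
      have hdvd : (d : ℤ) ∣ (((k : ℕ) : ℤ) + 1) := (dvd_neg).mp this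
      have hdvd' : d ∣ ((k : ℕ) + 1) := by exact_mod_cast hdvd
      have hle : d ≤ (k : ℕ) + 1 := Nat.le_of_dvd (Nat.succ_pos _) hdvd'
      have : (k : ℕ) + 1 ≤ d := k.isLt
      omega
    · rcases reach1 d hd k _ v hv rfl h1 with heq | hpr
      · exact absurd heq hne
      · exact hpr
  · intro hk v hv hne
    have hnn := hv.1
    have hge : 0 ≤ ∑ i : Fin d, v i := Finset.sum_nonneg (fun i _ => hnn i)
    have hcov0 : covRel d 0 (stdBasis d k) := by
      refine ⟨fun i => le_refl 0, std_nonneg d k, stdBasis d k - stdBasis d k - stdBasis d k,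
        ⟨k, k, k, ?_, rfl⟩, ?_⟩
      · have : ((k : ℕ) : ℤ) + 1 = d := by exact_mod_cast hk
        exact ⟨-1, by linarith⟩
      · funext m; simp [stdBasis]
    rcases eq_or_lt_of_le hge with h0 | h1
    · exact absurd (eq_zero_of d v hnn h0.symm) hne
    · rcases reach1 d hd k _ v hv rfl h1 with heq | hpr
      · exact Relation.TransGen.single (heq ▸ hcov0)
      · exact Relation.TransGen.head hcov0 hpr
end

section
/- For d = 2 and every k ∈ ℤ_{≥0}, the number of principal-ideal elements satisfies C_{2k}^{(2)} = (k+1)(k+2)/2, and moreover C_{2k+1}^{(2)} = C_{2k}^{(2)}. -/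
/-- `X_2 = {(-2,1),(0,-1)}`. -/
def X2 : Set (Fin 2 → ℤ) := {![-2, 1], ![0, -1]}

def nonneg2 (v : Fin 2 → ℤ) : Prop := ∀ i, 0 ≤ v i

def cov2 (v w : Fin 2 → ℤ) : Prop := nonneg2 v ∧ nonneg2 w ∧ ∃ x ∈ X2, v = w + x

def prec2 : (Fin 2 → ℤ) → (Fin 2 → ℤ) → Prop := Relation.TransGen cov2

def ideal2 (v : Fin 2 → ℤ) : Set (Fin 2 → ℤ) := {v} ∪ { w | prec2 w v }

noncomputable def C2 (n : ℕ) : ℕ := (ideal2 ![(n : ℤ), 0]).ncard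

/-- Auxiliary description of the ideal. -/
def Sset (n : ℕ) : Set (Fin 2 → ℤ) :=
  {w | ∃ a c : ℕ, c ≤ a ∧ 2 * a ≤ n ∧ w = ![(n : ℤ) - 2 * a, (c : ℤ)]}

lemma step_mem (n : ℕ) {w u : Fin 2 → ℤ} (hw : w ∈ Sset n) (h : cov2 u w) :
    u ∈ Sset n := by
  obtain ⟨a, c, hca, han, rfl⟩ := hw
  obtain ⟨hu, -, x, hx, rfl⟩ := h
  rcases hx with rfl | rfl
  · have h0 := hu 0
    simp [Matrix.cons_val_zero] at h0
    refine ⟨a + 1, c + 1, by omega, by push_cast at h0 ⊢; omega, ?_⟩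
    funext i; fin_cases i <;> simp <;> push_cast <;> ring
  · have h1 := hu 1
    simp at h1
    have hc : 1 ≤ c := by exact_mod_cast by push_cast at h1; omega
    refine ⟨a, c - 1, by omega, han, ?_⟩
    funext i; fin_cases i <;> simp
    push_cast [hc]
    ring

lemma prec_mem (n : ℕ) {w : Fin 2 → ℤ} (h : prec2 w ![(n : ℤ), 0]) :
    w ∈ Sset n := by
  have hv : (![(n : ℤ), 0]) ∈ Sset n := by
    refine ⟨0, 0, le_refl _, by omega, ?_⟩
    funext i; fin_cases i <;> simp
  induction h using Relation.TransGen.head_induction_on with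
  | single h => exact step_mem n hv h
  | head h _ ih => exact step_mem n ih h

lemma chainA (n : ℕ) : ∀ a : ℕ, 2 * a ≤ n →
    Relation.ReflTransGen cov2 ![(n : ℤ) - 2 * a, (a : ℤ)] ![(n : ℤ), 0] := by
  intro a
  induction a with
  | zero =>
    intro _
    have : (![(n : ℤ) - 2 * (0 : ℕ), ((0 : ℕ) : ℤ)]) = ![(n : ℤ), 0] := by
      funext i; fin_cases i <;> simp
    rw [this]
  | succ a ih =>
    intro h
    have h' : 2 * a ≤ n := by omega
    refine Relation.ReflTransGen.head ?_ (ih h')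
    refine ⟨?_, ?_, ![-2, 1], Or.inl rfl, ?_⟩
    · intro i; fin_cases i <;> simp <;> push_cast <;> omega
    · intro i; fin_cases i <;> simp <;> push_cast <;> omega
    · funext i; fin_cases i <;> simp <;> push_cast <;> ring

lemma chainB (t : ℤ) (ht : 0 ≤ t) : ∀ k c : ℕ,
    Relation.ReflTransGen cov2 ![t, (c : ℤ)] ![t, ((c + k : ℕ) : ℤ)] := by
  intro k
  induction k with
  | zero =>
    intro c
    rw [Nat.add_zero]
  | succ k ih =>
    intro c
    have step : cov2 ![t, (c : ℤ)] ![t, ((c + 1 : ℕ) : ℤ)] := by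
      refine ⟨?_, ?_, ![0, -1], Or.inr rfl, ?_⟩
      · intro i; fin_cases i <;> simp [ht] <;> positivity
      · intro i; fin_cases i <;> simp [ht] <;> positivity
      · funext i; fin_cases i <;> simp <;> push_cast <;> ring
    have := ih (c + 1)
    have hrw : c + 1 + k = c + (k + 1) := by omega
    rw [hrw] at this
    exact Relation.ReflTransGen.head step this

lemma ideal_eq (n : ℕ) : ideal2 ![(n : ℤ), 0] = Sset n := by
  ext w
  constructor
  · rintro (rfl | h)
    · exact ⟨0, 0, le_refl _, by omega, by funext i; fin_cases i <;> simp⟩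
    · exact prec_mem n h
  · rintro ⟨a, c, hca, han, rfl⟩
    have ht : (0 : ℤ) ≤ (n : ℤ) - 2 * a := by push_cast; omega
    have hB := chainB ((n : ℤ) - 2 * a) ht (a - c) c
    have hrw : c + (a - c) = a := by omega
    rw [hrw] at hB
    have hchain := hB.trans (chainA n a han)
    rcases Relation.reflTransGen_iff_eq_or_transGen.mp hchain with h | h
    · left; exact h.symm ▸ rfl
    · right; exact h

lemma ideal_card (n : ℕ) : 2 * C2 n = (n / 2 + 1) * (n / 2 + 2) := by
  set m := n / 2 with hm
  have key : Sset n =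
      ↑(((Finset.range (m + 1)).sigma fun a => Finset.range (a + 1)).image
        fun s => ![(n : ℤ) - 2 * s.1, (s.2 : ℤ)]) := by
    ext w
    simp only [Finset.coe_image, Set.mem_image, Finset.mem_coe, Finset.mem_sigma,
      Finset.mem_range]
    constructor
    · rintro ⟨a, c, hca, han, rfl⟩
      refine ⟨⟨a, c⟩, ⟨?_, ?_⟩, rfl⟩ <;> dsimp only <;> omega
    · rintro ⟨⟨a, c⟩, ⟨ha, hc⟩, rfl⟩
      dsimp only at ha hc
      exact ⟨a, c, by omega, by omega, rfl⟩
  have hinj : Set.InjOn (fun s : (_ : ℕ) × ℕ => ![(n : ℤ) - 2 * s.1, (s.2 : ℤ)])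
      ↑((Finset.range (m + 1)).sigma fun a => Finset.range (a + 1)) := by
    rintro ⟨a, c⟩ - ⟨a', c'⟩ - h
    have h0 := congrFun h 0
    have h1 := congrFun h 1
    simp at h0 h1
    have : a = a' := by omega
    subst this
    have : c = c' := by exact_mod_cast h1
    subst this
    rfl
  have hcard : ((Finset.range (m + 1)).sigma fun a => Finset.range (a + 1)).card
      = ∑ a ∈ Finset.range (m + 1), (a + 1) := by
    rw [Finset.card_sigma]; simp
  have hgauss : 2 * ∑ a ∈ Finset.range (m + 1), (a + 1) = (m + 1) * (m + 2) := by
    induction m with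
    | zero => simp
    | succ m ih => rw [Finset.sum_range_succ]; ring_nf; ring_nf at ih; omega
  have : C2 n = ∑ a ∈ Finset.range (m + 1), (a + 1) := by
    rw [C2, ideal_eq, key, Set.ncard_coe_finset,
      Finset.card_image_of_injOn (by simpa using hinj), hcard]
  omega

theorem stmt4 (k : ℕ) :
    C2 (2 * k) = (k + 1) * (k + 2) / 2 ∧ C2 (2 * k + 1) = C2 (2 * k) := by
  have h1 := ideal_card (2 * k)
  have h2 := ideal_card (2 * k + 1)
  have e1 : 2 * k / 2 = k := by omega
  have e2 : (2 * k + 1) / 2 = k := by omega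
  rw [e1] at h1
  rw [e2] at h2
  constructor
  · generalize hM : (k + 1) * (k + 2) = M at h1 ⊢
    omega
  · omega
end

section
/- For d = 3, the restriction to Λ_3 = ℤ_{≥0}^3 of the order ≺' on ℤ^3 (defined as the transitive closure, within all of ℤ^3, of w + x ⋖ w for x ∈ X_3) coincides with the order ≺ on Λ_3 (defined using only paths that stay inside Λ_3). -/
/-- `X_3 = {(1,-2,0), (-2,1,0), (-1,-1,1), (0,0,-1)}`. -/
def X3 : Set (Fin 3 → ℤ) := {![1, -2, 0], ![-2, 1, 0], ![-1, -1, 1], ![0, 0, -1]}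

def nonneg3 (v : Fin 3 → ℤ) : Prop := ∀ i, 0 ≤ v i

/-- Covering relation `v ⋖ w` on `Λ_3 = ℤ_{≥0}^3`. -/
def cov3 (v w : Fin 3 → ℤ) : Prop := nonneg3 v ∧ nonneg3 w ∧ ∃ x ∈ X3, v = w + x

/-- The order `≺` on `Λ_3`. -/
def prec3 : (Fin 3 → ℤ) → (Fin 3 → ℤ) → Prop := Relation.TransGen cov3

/-- The principal ideal `I(v) = {v} ∪ {w : w ≺ v}`. -/
def ideal3 (v : Fin 3 → ℤ) : Set (Fin 3 → ℤ) := {v} ∪ { w | prec3 w v }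

/-- `C_n^{(3)} = |I(n·e(1))|`. -/
noncomputable def C3 (n : ℕ) : ℕ := (ideal3 ![(n : ℤ), 0, 0]).ncard

/-- `C_{n,h}^{(3)}`: the number of elements of height `h` in `I(n·e(1))`. -/
noncomputable def C3h (n h : ℕ) : ℕ :=
  ({ w ∈ ideal3 ![(n : ℤ), 0, 0] | w 0 + w 1 + w 2 = (h : ℤ) }).ncard

/-- The order `≺'` on all of `ℤ^3`. -/
def prec3' : (Fin 3 → ℤ) → (Fin 3 → ℤ) → Prop :=
  Relation.TransGen (fun v w => ∃ x ∈ X3, v = w + x)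

lemma step3_cases {x : Fin 3 → ℤ} (hx : x ∈ X3) :
    x = ![1,-2,0] ∨ x = ![-2,1,0] ∨ x = ![-1,-1,1] ∨ x = ![0,0,-1] := by
  simpa [X3, Set.mem_insert_iff] using hx

lemma prec3'_counts {v w : Fin 3 → ℤ} (h : prec3' v w) :
    ∃ p q r s : ℕ, 1 ≤ p+q+r+s ∧
      v 0 = w 0 + p - 2*q - r ∧ v 1 = w 1 - 2*p + q - r ∧ v 2 = w 2 + r - s := by
  induction h with
  | single hx =>
    obtain ⟨x, hx, hvw⟩ := hx
    subst hvw
    rcases step3_cases hx with h|h|h|h <;> subst h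
    · exact ⟨1,0,0,0, by norm_num, by simp; try omega, by simp; try omega, by simp; try omega⟩
    · exact ⟨0,1,0,0, by norm_num, by simp; try omega, by simp; try omega, by simp; try omega⟩
    · exact ⟨0,0,1,0, by norm_num, by simp; try omega, by simp; try omega, by simp; try omega⟩
    · exact ⟨0,0,0,1, by norm_num, by simp; try omega, by simp; try omega, by simp; try omega⟩
  | tail hb hbw ih =>
    obtain ⟨x, hx, hbweq⟩ := hbw
    obtain ⟨p,q,r,s, hn, e0,e1,e2⟩ := ih
    subst hbweq
    rcases step3_cases hx with h|h|h|h <;> subst h <;> simp [Matrix.vecHead, Matrix.vecTail] at e0 e1 e2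
    · exact ⟨p+1,q,r,s, by omega, by push_cast; omega, by push_cast; omega, by push_cast; omega⟩
    · exact ⟨p,q+1,r,s, by omega, by push_cast; omega, by push_cast; omega, by push_cast; omega⟩
    · exact ⟨p,q,r+1,s, by omega, by push_cast; omega, by push_cast; omega, by push_cast; omega⟩
    · exact ⟨p,q,r,s+1, by omega, by push_cast; omega, by push_cast; omega, by push_cast; omega⟩

lemma step_or_tail {u v x : Fin 3 → ℤ} (hx : x ∈ X3) (hu : nonneg3 u)
    (hux : nonneg3 (u + x)) (h : v = u + x ∨ prec3 v (u + x)) : prec3 v u :=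
  h.elim (fun he => he ▸ Relation.TransGen.single ⟨hux, hu, x, hx, rfl⟩)
    (fun hp => hp.tail ⟨hux, hu, x, hx, rfl⟩)

lemma key : ∀ n p q r s : ℕ, p+q+r+s = n → ∀ u v : Fin 3 → ℤ,
    nonneg3 u → nonneg3 v →
    v 0 = u 0 + p - 2*q - r → v 1 = u 1 - 2*p + q - r → v 2 = u 2 + r - s →
    1 ≤ n → prec3 v u := by
  intro n
  induction n using Nat.strong_induction_on with
  | _ n IH =>
  intro p q r s hsum u v hu hv e0 e1 e2 hn
  have hu0 := hu 0; have hu1 := hu 1; have hu2 := hu 2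
  have hv0 := hv 0; have hv1 := hv 1; have hv2 := hv 2
  by_cases hS : 1 ≤ s ∧ 1 ≤ u 2
  · -- apply step d = ![0,0,-1]
    have hxm : (![0,0,-1] : Fin 3 → ℤ) ∈ X3 := by simp [X3]
    have hux : nonneg3 (u + ![0,0,-1]) := by
      intro i; fin_cases i <;> simp [Matrix.vecHead, Matrix.vecTail] <;> omega
    refine step_or_tail hxm hu hux ?_
    by_cases hone : n = 1
    · left
      have : p = 0 ∧ q = 0 ∧ r = 0 ∧ s = 1 := by omega
      funext i; fin_cases i <;> simp [Matrix.vecHead, Matrix.vecTail] <;> omega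
    · right
      refine IH (n-1) (by omega) p q r (s-1) (by omega) _ v hux hv ?_ ?_ ?_ (by omega)
      all_goals simp [Matrix.vecHead, Matrix.vecTail]; push_cast; omega
  · by_cases hA : 1 ≤ p ∧ 2 ≤ u 1
    · have hxm : (![1,-2,0] : Fin 3 → ℤ) ∈ X3 := by simp [X3]
      have hux : nonneg3 (u + ![1,-2,0]) := by
        intro i; fin_cases i <;> simp [Matrix.vecHead, Matrix.vecTail] <;> omega
      refine step_or_tail hxm hu hux ?_
      by_cases hone : n = 1
      · left
        have : p = 1 ∧ q = 0 ∧ r = 0 ∧ s = 0 := by omega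
        funext i; fin_cases i <;> simp [Matrix.vecHead, Matrix.vecTail] <;> omega
      · right
        refine IH (n-1) (by omega) (p-1) q r s (by omega) _ v hux hv ?_ ?_ ?_ (by omega)
        all_goals simp [Matrix.vecHead, Matrix.vecTail]; push_cast; omega
    · by_cases hB : 1 ≤ q ∧ 2 ≤ u 0
      · have hxm : (![-2,1,0] : Fin 3 → ℤ) ∈ X3 := by simp [X3]
        have hux : nonneg3 (u + ![-2,1,0]) := by
          intro i; fin_cases i <;> simp [Matrix.vecHead, Matrix.vecTail] <;> omega
        refine step_or_tail hxm hu hux ?_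
        by_cases hone : n = 1
        · left
          have : p = 0 ∧ q = 1 ∧ r = 0 ∧ s = 0 := by omega
          funext i; fin_cases i <;> simp [Matrix.vecHead, Matrix.vecTail] <;> omega
        · right
          refine IH (n-1) (by omega) p (q-1) r s (by omega) _ v hux hv ?_ ?_ ?_ (by omega)
          all_goals simp [Matrix.vecHead, Matrix.vecTail]; push_cast; omega
      · by_cases hC : 1 ≤ r ∧ 1 ≤ u 0 ∧ 1 ≤ u 1
        · have hxm : (![-1,-1,1] : Fin 3 → ℤ) ∈ X3 := by simp [X3]
          have hux : nonneg3 (u + ![-1,-1,1]) := by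
            intro i; fin_cases i <;> simp [Matrix.vecHead, Matrix.vecTail] <;> omega
          refine step_or_tail hxm hu hux ?_
          by_cases hone : n = 1
          · left
            have : p = 0 ∧ q = 0 ∧ r = 1 ∧ s = 0 := by omega
            funext i; fin_cases i <;> simp [Matrix.vecHead, Matrix.vecTail] <;> omega
          · right
            refine IH (n-1) (by omega) p q (r-1) s (by omega) _ v hux hv ?_ ?_ ?_ (by omega)
            all_goals simp [Matrix.vecHead, Matrix.vecTail]; push_cast; omega
        · -- stuck case: p = q = 1, r = s = 0, u 0 = u 1 = 1
          have hst : p = 1 ∧ q = 1 ∧ r = 0 ∧ s = 0 ∧ u 0 = 1 ∧ u 1 = 1 := by omega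
          have hxc : (![-1,-1,1] : Fin 3 → ℤ) ∈ X3 := by simp [X3]
          have hxd : (![0,0,-1] : Fin 3 → ℤ) ∈ X3 := by simp [X3]
          have hu' : nonneg3 (u + ![-1,-1,1]) := by
            intro i; fin_cases i <;> simp [Matrix.vecHead, Matrix.vecTail] <;> omega
          have hveq : v = (u + ![-1,-1,1]) + ![0,0,-1] := by
            funext i; fin_cases i <;> simp [Matrix.vecHead, Matrix.vecTail] <;> omega
          exact Relation.TransGen.head ⟨hv, hu', _, hxd, hveq⟩
            (Relation.TransGen.single ⟨hu', hu, _, hxc, rfl⟩)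

theorem stmt6 (v w : Fin 3 → ℤ) (hv : nonneg3 v) (hw : nonneg3 w) :
    prec3' v w ↔ prec3 v w := by
  constructor
  · intro h
    obtain ⟨p,q,r,s,hn,e0,e1,e2⟩ := prec3'_counts h
    exact key (p+q+r+s) p q r s rfl w v hw hv e0 e1 e2 hn
  · intro h
    exact Relation.TransGen.mono (r := cov3) (fun a b (hab : cov3 a b) => hab.2.2) v w h
end

section
/- For d = 3 and h ≥ ⌈n/2⌉, the number C_{n,h}^{(3)} of elements of height h in the principal ideal I(n·e(1)) equals the number of partitions of n - h into at most 3 parts. Concretely, the map sending a partition (a,b,c) of n-h (a ≥ b ≥ c ≥ 0) to (n,0,0) + a(-2,1,0) + b(-1,-1,1) + c(0,0,-1) is a bijection onto the set of height-h elements of I(n·e(1)). -/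
lemma mem_ideal3_of_cov {v u w : Fin 3 → ℤ} (h : cov3 u w) (hw : w ∈ ideal3 v) :
    u ∈ ideal3 v := by
  rcases hw with hw | hw
  · exact Or.inr (Relation.TransGen.single (hw ▸ h))
  · exact Or.inr (Relation.TransGen.head h hw)

def pt (n : ℤ) (a b c : ℕ) : Fin 3 → ℤ := ![n - 2*a - b, (a : ℤ) - b, (b : ℤ) - c]

lemma pt_nonneg {n : ℤ} {a b c : ℕ} (hba : b ≤ a) (hcb : c ≤ b) (h2 : 2*(a:ℤ) + b ≤ n) :
    nonneg3 (pt n a b c) := by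
  intro i
  fin_cases i <;> simp [pt] <;> omega

lemma pt_memA (n : ℤ) (a : ℕ) (h2 : 2*(a:ℤ) ≤ n) : pt n a 0 0 ∈ ideal3 ![n, 0, 0] := by
  induction a with
  | zero =>
    left
    funext i; fin_cases i <;> simp [pt]
  | succ a ih =>
    have ha : 2*(a:ℤ) ≤ n := by push_cast at h2 ⊢; omega
    refine mem_ideal3_of_cov ?_ (ih ha)
    refine ⟨pt_nonneg (Nat.zero_le _) (le_refl _) (by push_cast at h2 ⊢; omega),
      pt_nonneg (Nat.zero_le _) (le_refl _) (by omega), ![-2,1,0], ?_, ?_⟩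
    · right; left; rfl
    · funext i; fin_cases i <;> simp [pt] <;> push_cast <;> ring

lemma pt_memB (n : ℤ) (a b : ℕ) (hba : b ≤ a) (h2 : 2*(a:ℤ) + b ≤ n) :
    pt n a b 0 ∈ ideal3 ![n, 0, 0] := by
  induction b with
  | zero => exact pt_memA n a (by omega)
  | succ b ih =>
    have hb : b ≤ a := by omega
    have h2' : 2*(a:ℤ) + b ≤ n := by push_cast at h2 ⊢; omega
    refine mem_ideal3_of_cov ?_ (ih hb h2')
    refine ⟨pt_nonneg hba (Nat.zero_le _) h2,
      pt_nonneg hb (Nat.zero_le _) h2', ![-1,-1,1], ?_, ?_⟩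
    · right; right; left; rfl
    · funext i; fin_cases i <;> simp [pt] <;> push_cast <;> ring

lemma pt_mem (n : ℤ) (a b c : ℕ) (hba : b ≤ a) (hcb : c ≤ b) (h2 : 2*(a:ℤ) + b ≤ n) :
    pt n a b c ∈ ideal3 ![n, 0, 0] := by
  induction c with
  | zero => exact pt_memB n a b hba h2
  | succ c ih =>
    have hc : c ≤ b := by omega
    refine mem_ideal3_of_cov ?_ (ih hc)
    refine ⟨pt_nonneg hba hcb h2, pt_nonneg hba hc h2, ![0,0,-1], ?_, ?_⟩
    · right; right; right; rfl
    · funext i; fin_cases i <;> simp [pt] <;> push_cast <;> ring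

lemma inv_step {n : ℤ} {u w : Fin 3 → ℤ} (h : cov3 u w)
    (hw : (3 ∣ (n + w 1 - w 0)) ∧ w 0 + 2*w 1 + 3*w 2 ≤ n) :
    nonneg3 u ∧ (3 ∣ (n + u 1 - u 0)) ∧ u 0 + 2*u 1 + 3*u 2 ≤ n := by
  obtain ⟨hu, hw2, x, hx, hux⟩ := h
  obtain ⟨hd, hg⟩ := hw
  refine ⟨hu, ?_, ?_⟩ <;>
  · simp only [X3, Set.mem_insert_iff, Set.mem_singleton_iff] at hx
    rcases hx with hx | hx | hx | hx <;> subst hx <;> subst hux <;>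
      simp only [Pi.add_apply] at * <;> simp at * <;> omega

lemma ideal3_inv (n : ℕ) {w : Fin 3 → ℤ} (hw : w ∈ ideal3 ![(n:ℤ), 0, 0]) :
    nonneg3 w ∧ (3 ∣ ((n:ℤ) + w 1 - w 0)) ∧ w 0 + 2*w 1 + 3*w 2 ≤ n := by
  have hbase : (3 ∣ ((n:ℤ) + (![(n:ℤ),0,0]) 1 - (![(n:ℤ),0,0]) 0)) ∧
      (![(n:ℤ),0,0]) 0 + 2*(![(n:ℤ),0,0]) 1 + 3*(![(n:ℤ),0,0]) 2 ≤ (n:ℤ) := by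
    constructor <;> simp
  rcases hw with hw | hw
  · subst hw
    refine ⟨?_, hbase⟩
    intro i; fin_cases i <;> simp
  · induction hw using Relation.TransGen.head_induction_on with
    | single h => exact inv_step h hbase
    | head h _ ih => exact inv_step h ⟨ih.2.1, ih.2.2⟩

theorem stmt7 (n h : ℕ) (hn : h ≤ n) (hh : (n + 1) / 2 ≤ h) :
    C3h n h =
      Set.ncard { p : ℕ × ℕ × ℕ |
        p.2.1 ≤ p.1 ∧ p.2.2 ≤ p.2.1 ∧ p.1 + p.2.1 + p.2.2 = n - h } ∧
    Set.BijOn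
      (fun p : ℕ × ℕ × ℕ =>
        ![(n : ℤ), 0, 0] + (p.1 : ℤ) • ![-2, 1, 0] + (p.2.1 : ℤ) • ![-1, -1, 1]
          + (p.2.2 : ℤ) • ![0, 0, -1])
      { p : ℕ × ℕ × ℕ | p.2.1 ≤ p.1 ∧ p.2.2 ≤ p.2.1 ∧ p.1 + p.2.1 + p.2.2 = n - h }
      { w ∈ ideal3 ![(n : ℤ), 0, 0] | w 0 + w 1 + w 2 = (h : ℤ) } := by
  have key : ∀ (a b c : ℕ),
      (![(n : ℤ), 0, 0] + (a : ℤ) • ![-2, 1, 0] + (b : ℤ) • ![-1, -1, 1]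
        + (c : ℤ) • ![0, 0, -1]) = pt n a b c := by
    intro a b c
    funext i; fin_cases i <;> simp [pt] <;> push_cast <;> ring
  have hbij : Set.BijOn
      (fun p : ℕ × ℕ × ℕ =>
        ![(n : ℤ), 0, 0] + (p.1 : ℤ) • ![-2, 1, 0] + (p.2.1 : ℤ) • ![-1, -1, 1]
          + (p.2.2 : ℤ) • ![0, 0, -1])
      { p : ℕ × ℕ × ℕ | p.2.1 ≤ p.1 ∧ p.2.2 ≤ p.2.1 ∧ p.1 + p.2.1 + p.2.2 = n - h }
      { w ∈ ideal3 ![(n : ℤ), 0, 0] | w 0 + w 1 + w 2 = (h : ℤ) } := by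
    refine ⟨?_, ?_, ?_⟩
    · rintro ⟨a, b, c⟩ ⟨h1, h2, h3⟩
      dsimp only at h1 h2 h3
      simp only [key]
      have h3' : a + b + c + h = n := by omega
      have h2ab : 2*(a:ℤ) + b ≤ n := by exact_mod_cast Nat.cast_le.mpr (by omega : 2*a + b ≤ n)
      refine ⟨pt_mem n a b c h1 h2 h2ab, ?_⟩
      simp only [pt, Matrix.cons_val_zero, Matrix.cons_val_one, Matrix.head_cons,
        Matrix.cons_val_two, Matrix.tail_cons]
      omega
    · rintro ⟨a, b, c⟩ _ ⟨a', b', c'⟩ _ heq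
      simp only [key] at heq
      have e0 := congrFun heq 0
      have e1 := congrFun heq 1
      have e2 := congrFun heq 2
      simp only [pt, Matrix.cons_val_zero, Matrix.cons_val_one, Matrix.head_cons,
        Matrix.cons_val_two, Matrix.tail_cons] at e0 e1 e2
      simp only [Prod.mk.injEq]
      refine ⟨by omega, by omega, by omega⟩
    · rintro w ⟨hwI, hwh⟩
      obtain ⟨hnn, hdvd, hg⟩ := ideal3_inv n hwI
      obtain ⟨k, hk⟩ := hdvd
      have h0 := hnn 0
      have h1 := hnn 1
      have h2 := hnn 2
      refine ⟨(k.toNat, (k - w 1).toNat, (k - w 1 - w 2).toNat), ⟨?_, ?_, ?_⟩, ?_⟩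
      · simp only; omega
      · simp only; omega
      · simp only; omega
      · simp only [key]
        have hww : w = ![w 0, w 1, w 2] := by funext j; fin_cases j <;> rfl
        rw [hww]
        funext i; fin_cases i <;> simp [pt] <;> omega
  refine ⟨?_, hbij⟩
  rw [C3h, ← hbij.image_eq, Set.ncard_image_of_injOn hbij.injOn]
end

section
/- For d = 3 and h ≤ ⌈n/3⌉, every element of Λ_3 of height h lying in the same congruence class Λ_{3,k} as n·e(1) belongs to the principal ideal I(n·e(1)); that is, |{w ∈ I(n·e(1)) : ht(w) = h}| = |Λ_3^{(h)} ∩ Λ_{3,k}|, where k ∈ {1,2,3} satisfies n·e(1) ∈ Λ_{3,k}. -/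
lemma nonneg3_cons {a b c : ℤ} (ha : 0 ≤ a) (hb : 0 ≤ b) (hc : 0 ≤ c) :
    nonneg3 ![a, b, c] := by
  intro i; fin_cases i <;> simpa

lemma mem_ideal3_iff (v w : Fin 3 → ℤ) :
    w ∈ ideal3 v ↔ Relation.ReflTransGen cov3 w v := by
  rw [Relation.reflTransGen_iff_eq_or_transGen]
  constructor
  · rintro (h | h)
    · exact Or.inl (Set.mem_singleton_iff.mp h).symm
    · exact Or.inr h
  · rintro (h | h)
    · exact Or.inl (Set.mem_singleton_iff.mpr h.symm)
    · exact Or.inr h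

-- move C (down): v = w + (-1,-1,1)
lemma covC {a b c : ℤ} (ha : 0 ≤ a) (hb : 0 ≤ b) (hc : 0 ≤ c) :
    cov3 ![a, b, c + 1] ![a + 1, b + 1, c] := by
  refine ⟨nonneg3_cons ha hb (by omega), nonneg3_cons (by omega) (by omega) hc,
    ![-1, -1, 1], by simp [X3], ?_⟩
  funext i; fin_cases i <;> simp

-- move B (down): v = w + (-2,1,0)
lemma covB {a b c : ℤ} (ha : 0 ≤ a) (hb : 0 ≤ b) (hc : 0 ≤ c) :
    cov3 ![a, b + 1, c] ![a + 2, b, c] := by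
  refine ⟨nonneg3_cons ha (by omega) hc, nonneg3_cons (by omega) hb hc,
    ![-2, 1, 0], by simp [X3], ?_⟩
  funext i; fin_cases i <;> simp

-- move D (down): v = w + (0,0,-1)
lemma covD {a b c : ℤ} (ha : 0 ≤ a) (hb : 0 ≤ b) (hc : 0 ≤ c) :
    cov3 ![a, b, c] ![a, b, c + 1] := by
  refine ⟨nonneg3_cons ha hb hc, nonneg3_cons ha hb (by omega),
    ![0, 0, -1], by simp [X3], ?_⟩
  funext i; fin_cases i <;> simp

/-- Clear the third coordinate with `C` moves. -/
lemma chainC (c : ℕ) : ∀ a b : ℤ, 0 ≤ a → 0 ≤ b →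
    Relation.ReflTransGen cov3 ![a, b, (c : ℤ)] ![a + c, b + c, 0] := by
  induction c with
  | zero => intro a b _ _; simp; exact Relation.ReflTransGen.refl
  | succ c ih =>
    intro a b ha hb
    have step : cov3 ![a, b, ((c : ℤ) + 1)] ![a + 1, b + 1, (c : ℤ)] :=
      covC ha hb (by positivity)
    have tail := ih (a + 1) (b + 1) (by omega) (by omega)
    have : Relation.ReflTransGen cov3 ![a, b, ((c : ℤ) + 1)] ![a + 1 + c, b + 1 + c, 0] :=
      Relation.ReflTransGen.head step tail
    have e1 : ((c : ℤ) + 1) = ((c + 1 : ℕ) : ℤ) := by push_cast; ring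
    have e2 : a + 1 + c = a + ((c + 1 : ℕ) : ℤ) := by push_cast; ring
    have e3 : b + 1 + c = b + ((c + 1 : ℕ) : ℤ) := by push_cast; ring
    rwa [e1, e2, e3] at this

/-- Clear the second coordinate with `B` moves. -/
lemma chainB_s8 (b : ℕ) : ∀ a : ℤ, 0 ≤ a →
    Relation.ReflTransGen cov3 ![a, (b : ℤ), 0] ![a + 2 * b, 0, 0] := by
  induction b with
  | zero => intro a _; simp; exact Relation.ReflTransGen.refl
  | succ b ih =>
    intro a ha
    have step : cov3 ![a, ((b : ℤ) + 1), 0] ![a + 2, (b : ℤ), 0] :=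
      covB ha (by positivity) le_rfl
    have tail := ih (a + 2) (by omega)
    have : Relation.ReflTransGen cov3 ![a, ((b : ℤ) + 1), 0] ![a + 2 + 2 * b, 0, 0] :=
      Relation.ReflTransGen.head step tail
    have e1 : ((b : ℤ) + 1) = ((b + 1 : ℕ) : ℤ) := by push_cast; ring
    have e2 : a + 2 + 2 * b = a + 2 * ((b + 1 : ℕ) : ℤ) := by push_cast; ring
    rwa [e1, e2] at this

/-- Go up by threes along the first axis. -/
lemma chainT (t : ℕ) : ∀ m : ℤ, 0 ≤ m →
    Relation.ReflTransGen cov3 ![m, 0, 0] ![m + 3 * t, 0, 0] := by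
  induction t with
  | zero => intro m _; simp; exact Relation.ReflTransGen.refl
  | succ t ih =>
    intro m hm
    have s1 : cov3 ![m, 0, 0] ![m, 0, 1] := covD hm le_rfl le_rfl
    have s2 : cov3 ![m, (0 : ℤ), 0 + 1] ![m + 1, 0 + 1, 0] := covC hm le_rfl le_rfl
    have s3 : cov3 ![m + 1, (0 : ℤ) + 1, 0] ![m + 1 + 2, 0, 0] := covB (by omega) le_rfl le_rfl
    have tail := ih (m + 3) (by omega)
    have chain : Relation.ReflTransGen cov3 ![m, 0, 0] ![m + 3 + 3 * t, 0, 0] := by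
      refine Relation.ReflTransGen.head s1 ?_
      refine Relation.ReflTransGen.head (by simpa using s2) ?_
      refine Relation.ReflTransGen.head (by simpa using s3) ?_
      have e : m + 1 + 2 = m + 3 := by ring
      rw [e]; exact tail
    have e2 : m + 3 + 3 * t = m + 3 * ((t + 1 : ℕ) : ℤ) := by push_cast; ring
    rwa [e2] at chain

/-- The invariant `w 0 + 2 w 1 + 3 w 2 (mod 3)` is preserved downwards. -/
lemma invariant {v w : Fin 3 → ℤ} (h : Relation.ReflTransGen cov3 v w) :
    (3 : ℤ) ∣ (v 0 + 2 * v 1 + 3 * v 2) - (w 0 + 2 * w 1 + 3 * w 2) := by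
  induction h with
  | refl => simp
  | tail _ hcov ih =>
    rename_i b c _
    obtain ⟨_, _, x, hx, hbe⟩ := hcov
    have hb0 : b 0 = c 0 + x 0 := by rw [hbe]; rfl
    have hb1 : b 1 = c 1 + x 1 := by rw [hbe]; rfl
    have hb2 : b 2 = c 2 + x 2 := by rw [hbe]; rfl
    rcases hx with hx | hx | hx | hx <;> subst hx <;>
      simp only [Matrix.cons_val_zero, Matrix.cons_val_one, Matrix.head_cons,
        Matrix.cons_val_two, Matrix.tail_cons] at hb0 hb1 hb2 <;> omega

lemma nonneg_of_mem {v w : Fin 3 → ℤ} (hv : nonneg3 v)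
    (h : Relation.ReflTransGen cov3 w v) : nonneg3 w := by
  rcases Relation.reflTransGen_iff_eq_or_transGen.mp h with rfl | h
  · exact hv
  · obtain ⟨hw, _⟩ := Relation.TransGen.head'_iff.mp h |>.choose_spec.1
    exact hw

theorem stmt8 (n h : ℕ) (hh : h ≤ (n + 2) / 3) (k : ℕ) (hk : k ∈ ({1, 2, 3} : Set ℕ))
    (hnk : (3 : ℤ) ∣ ((n : ℤ) - (k : ℤ))) :
    (∀ w : Fin 3 → ℤ, nonneg3 w → w 0 + w 1 + w 2 = (h : ℤ) →
        (3 : ℤ) ∣ (w 0 + 2 * w 1 + 3 * w 2 - (k : ℤ)) → w ∈ ideal3 ![(n : ℤ), 0, 0]) ∧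
    C3h n h = Set.ncard { w : Fin 3 → ℤ | nonneg3 w ∧ w 0 + w 1 + w 2 = (h : ℤ) ∧
        (3 : ℤ) ∣ (w 0 + 2 * w 1 + 3 * w 2 - (k : ℤ)) } := by
  have key : ∀ w : Fin 3 → ℤ, nonneg3 w → w 0 + w 1 + w 2 = (h : ℤ) →
      (3 : ℤ) ∣ (w 0 + 2 * w 1 + 3 * w 2 - (k : ℤ)) → w ∈ ideal3 ![(n : ℤ), 0, 0] := by
    intro w hw hsum hdvd
    have hw0 := hw 0; have hw1 := hw 1; have hw2 := hw 2
    have hwe : w = ![w 0, w 1, w 2] := by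
      funext i; fin_cases i <;> rfl
    rw [mem_ideal3_iff]
    -- m = w0 + 2 w1 + 3 w2
    set m : ℤ := w 0 + 2 * w 1 + 3 * w 2 with hm
    have hmn : (3 : ℤ) ∣ (n : ℤ) - m := by
      obtain ⟨s, hs⟩ := hdvd; obtain ⟨u, hu⟩ := hnk
      exact ⟨u - s, by omega⟩
    have hmle : m ≤ n := by
      have h3 : 3 * (h : ℤ) ≤ (n : ℤ) + 2 := by
        have := Nat.div_mul_le_self (n + 2) 3
        have hh3 : 3 * h ≤ n + 2 := by omega
        exact_mod_cast hh3
      obtain ⟨u, hu⟩ := hmn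
      omega
    -- stage 1: clear third coordinate
    obtain ⟨c, hc⟩ : ∃ c : ℕ, w 2 = (c : ℤ) := ⟨(w 2).toNat, by omega⟩
    have step1 : Relation.ReflTransGen cov3 w ![w 0 + c, w 1 + c, 0] := by
      have := chainC c (w 0) (w 1) hw0 hw1
      rw [hwe, hc]; exact this
    -- stage 2: clear second coordinate
    obtain ⟨b, hb⟩ : ∃ b : ℕ, w 1 + (c : ℤ) = (b : ℤ) := ⟨(w 1 + c).toNat, by omega⟩
    have step2 : Relation.ReflTransGen cov3 ![w 0 + c, w 1 + c, 0]
        ![w 0 + c + 2 * b, 0, 0] := by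
      have := chainB_s8 b (w 0 + c) (by omega)
      rw [hb]; exact this
    -- stage 3: climb to n
    have hme : w 0 + (c : ℤ) + 2 * b = m := by
      have : (c : ℤ) = w 2 := hc.symm
      have : (b : ℤ) = w 1 + c := hb.symm
      omega
    obtain ⟨t, ht⟩ : ∃ t : ℕ, (n : ℤ) = m + 3 * t := by
      obtain ⟨u, hu⟩ := hmn
      refine ⟨u.toNat, ?_⟩
      have : 0 ≤ u := by omega
      omega
    have hm0 : 0 ≤ m := by omega
    have step3 : Relation.ReflTransGen cov3 ![w 0 + c + 2 * b, 0, 0] ![(n : ℤ), 0, 0] := by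
      have := chainT t m hm0
      rw [hme, ht]; exact this
    exact (step1.trans step2).trans step3
  refine ⟨key, ?_⟩
  have hset : { w ∈ ideal3 ![(n : ℤ), 0, 0] | w 0 + w 1 + w 2 = (h : ℤ) } =
      { w : Fin 3 → ℤ | nonneg3 w ∧ w 0 + w 1 + w 2 = (h : ℤ) ∧
        (3 : ℤ) ∣ (w 0 + 2 * w 1 + 3 * w 2 - (k : ℤ)) } := by
    ext w
    simp only [Set.mem_setOf_eq, Set.mem_sep_iff]
    constructor
    · rintro ⟨hmem, hsum⟩
      rw [mem_ideal3_iff] at hmem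
      have hnn : nonneg3 w :=
        nonneg_of_mem (nonneg3_cons (by positivity) le_rfl le_rfl) hmem
      have hinv := invariant hmem
      simp only [Matrix.cons_val_zero, Matrix.cons_val_one, Matrix.head_cons] at hinv
      refine ⟨hnn, hsum, ?_⟩
      obtain ⟨s, hs⟩ := hinv; obtain ⟨u, hu⟩ := hnk
      have hv2 : (![(n : ℤ), 0, 0] : Fin 3 → ℤ) 2 = 0 := rfl
      rw [hv2] at hs
      exact ⟨s + u, by omega⟩
    · rintro ⟨hnn, hsum, hdvd⟩
      exact ⟨key w hnn hsum hdvd, hsum⟩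
  rw [C3h, hset]
end

section
/- For d = 3 and all n ≥ 0, C_n^{(3)} equals the n-th coefficient of the power series (1 + t^2 + t^3 + t^5)/((1-t)(1-t^3)(1-t^4)(1-t^6)), i.e., C_n^{(3)} is the Cyvin sequence A028289. -/
section Aux
open PowerSeries Finset

noncomputable def Sk (k : ℕ) : ℚ⟦X⟧ := PowerSeries.mk (fun n => if k ∣ n then 1 else 0)

lemma one_sub_pow_mul_Sk (k : ℕ) (hk : 0 < k) : (1 - (X:ℚ⟦X⟧)^k) * Sk k = 1 := by
  ext n
  rw [sub_mul, one_mul, map_sub, PowerSeries.coeff_X_pow_mul']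
  simp only [Sk, coeff_mk]
  rcases eq_or_ne n 0 with rfl | hn
  · simp [hk.ne']
  · have hd1 : k ∣ n → k ≤ n := fun h => Nat.le_of_dvd (Nat.pos_of_ne_zero hn) h
    have hd2 : k ∣ n → k ∣ n - k := fun h => Nat.dvd_sub h dvd_rfl
    have hd3 : k ≤ n → k ∣ n - k → k ∣ n := fun h h' =>
      (Nat.sub_add_cancel h) ▸ Dvd.dvd.add h' dvd_rfl
    rw [PowerSeries.coeff_one, if_neg hn]
    split_ifs with h1 h2 h3 h4 h5 h6
    any_goals ring
    · exact absurd (hd2 h1) h3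
    · exact absurd (hd1 h1) h2
    · exact absurd (hd3 h4 h5) h1

lemma constC (k : ℕ) (hk : 0 < k) : constantCoeff (1 - (X:ℚ⟦X⟧)^k) = 1 := by
  simp [hk.ne']

lemma rhs_eq : ((1 + (X : ℚ⟦X⟧) ^ 2 + X ^ 3 + X ^ 5) *
        (1 - (X : ℚ⟦X⟧))⁻¹ * (1 - (X : ℚ⟦X⟧) ^ 3)⁻¹ * (1 - (X : ℚ⟦X⟧) ^ 4)⁻¹ *
        (1 - (X : ℚ⟦X⟧) ^ 6)⁻¹) = Sk 1 * Sk 2 * Sk 3 * Sk 3 := by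
  set A := (1 - (X:ℚ⟦X⟧)) with hA
  set B := (1 - (X:ℚ⟦X⟧)^3) with hB
  set C := (1 - (X:ℚ⟦X⟧)^4) with hC
  set E := (1 - (X:ℚ⟦X⟧)^6) with hE
  have hD : A * B * C * E ≠ 0 := by
    intro h
    have := congrArg (constantCoeff (R := ℚ)) h
    simp [hA, hB, hC, hE] at this
  have h1 : A * A⁻¹ = 1 := by
    apply PowerSeries.mul_inv_cancel; rw [hA]; simp
  have h3 : B * B⁻¹ = 1 := by
    apply PowerSeries.mul_inv_cancel; rw [hB]; simp
  have h4 : C * C⁻¹ = 1 := by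
    apply PowerSeries.mul_inv_cancel; rw [hC]; simp
  have h6 : E * E⁻¹ = 1 := by
    apply PowerSeries.mul_inv_cancel; rw [hE]; simp
  apply mul_right_cancel₀ hD
  have lhs : (1 + (X : ℚ⟦X⟧) ^ 2 + X ^ 3 + X ^ 5) * A⁻¹ * B⁻¹ * C⁻¹ * E⁻¹ * (A * B * C * E)
      = (1 + (X : ℚ⟦X⟧) ^ 2 + X ^ 3 + X ^ 5) := by
    calc (1 + (X : ℚ⟦X⟧) ^ 2 + X ^ 3 + X ^ 5) * A⁻¹ * B⁻¹ * C⁻¹ * E⁻¹ * (A * B * C * E)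
        = (1 + (X : ℚ⟦X⟧) ^ 2 + X ^ 3 + X ^ 5) * ((A * A⁻¹) * (B * B⁻¹) * (C * C⁻¹) * (E * E⁻¹)) := by
          ring
      _ = _ := by rw [h1, h3, h4, h6]; ring
  rw [lhs]
  symm
  have s1 := one_sub_pow_mul_Sk 1 one_pos
  have s2 := one_sub_pow_mul_Sk 2 (by norm_num)
  have s3 := one_sub_pow_mul_Sk 3 (by norm_num)
  rw [pow_one] at s1
  have key : A * B * C * E = ((1 - (X:ℚ⟦X⟧)) * (1 - (X:ℚ⟦X⟧)^2) * ((1 - (X:ℚ⟦X⟧)^3) * (1 - (X:ℚ⟦X⟧)^3))) * ((1 + (X:ℚ⟦X⟧)^2) * (1 + (X:ℚ⟦X⟧)^3)) := by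
    rw [hA, hB, hC, hE]; ring
  calc Sk 1 * Sk 2 * Sk 3 * Sk 3 * (A * B * C * E)
      = ((1 - (X:ℚ⟦X⟧)) * Sk 1) * ((1 - (X:ℚ⟦X⟧)^2) * Sk 2) * ((1 - (X:ℚ⟦X⟧)^3) * Sk 3) * ((1 - (X:ℚ⟦X⟧)^3) * Sk 3) * ((1 + (X:ℚ⟦X⟧)^2) * (1 + (X:ℚ⟦X⟧)^3)) := by
        rw [key]; ring
    _ = (1 + (X : ℚ⟦X⟧) ^ 2 + X ^ 3 + X ^ 5) := by rw [s1, s2, s3]; ring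

def Q (n : ℕ) : Finset (ℕ × ℕ × ℕ × ℕ) :=
  (Finset.range (n+1) ×ˢ Finset.range (n+1) ×ˢ Finset.range (n+1) ×ˢ Finset.range (n+1)).filter
    (fun p => p.1 + 2*p.2.1 + 3*p.2.2.1 + 3*p.2.2.2 = n)

lemma coeff_q (n : ℕ) :
    PowerSeries.coeff n (Sk 1 * Sk 2 * Sk 3 * Sk 3) = ((Q n).card : ℚ) := by
  have assoc : Sk 1 * Sk 2 * Sk 3 * Sk 3 = Sk 1 * (Sk 2 * (Sk 3 * Sk 3)) := by ring
  rw [assoc]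
  simp only [PowerSeries.coeff_mul, Sk, coeff_mk, Finset.mul_sum]
  rw [Finset.sum_sigma']
  rw [Finset.sum_sigma']
  have step : ∀ x : (_ : (_ : ℕ × ℕ) × ℕ × ℕ) × ℕ × ℕ,
      ((if 1 ∣ x.1.1.1 then (1:ℚ) else 0) * ((if 2 ∣ x.1.2.1 then (1:ℚ) else 0) *
        ((if 3 ∣ x.2.1 then (1:ℚ) else 0) * (if 3 ∣ x.2.2 then (1:ℚ) else 0))))
      = (if 2 ∣ x.1.2.1 ∧ 3 ∣ x.2.1 ∧ 3 ∣ x.2.2 then (1:ℚ) else 0) := by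
    intro x; split_ifs <;> simp_all
  rw [Finset.sum_congr rfl (fun x _ => step x), Finset.sum_boole]
  congr 1
  apply Finset.card_bij' (i := fun (x : (_ : (_ : ℕ × ℕ) × ℕ × ℕ) × ℕ × ℕ) _ =>
      ((x.1.1.1, x.1.2.1/2, x.2.1/3, x.2.2/3) : ℕ × ℕ × ℕ × ℕ))
    (j := fun (p : ℕ × ℕ × ℕ × ℕ) _ =>
      (⟨⟨(p.1, n - p.1), (2*p.2.1, n - p.1 - 2*p.2.1)⟩, (3*p.2.2.1, 3*p.2.2.2)⟩ :
        (_ : (_ : ℕ × ℕ) × ℕ × ℕ) × ℕ × ℕ))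
  · intro x hx
    simp only [Finset.mem_filter, Finset.mem_sigma, Finset.HasAntidiagonal.mem_antidiagonal] at hx
    simp only [Q, Finset.mem_filter, Finset.mem_product, Finset.mem_range]
    omega
  · intro p hp
    simp only [Q, Finset.mem_filter, Finset.mem_product, Finset.mem_range] at hp
    simp only [Finset.mem_filter, Finset.mem_sigma, Finset.HasAntidiagonal.mem_antidiagonal]
    omega
  · intro x hx
    obtain ⟨⟨⟨i,j⟩,k,l⟩,p,q⟩ := x
    simp only [Finset.mem_filter, Finset.mem_sigma, Finset.HasAntidiagonal.mem_antidiagonal] at hx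
    simp only [Sigma.mk.inj_iff, Prod.mk.injEq, heq_eq_eq]
    repeat' apply And.intro
    all_goals first | trivial | omega
  · intro p hp
    obtain ⟨a,b,c,d⟩ := p
    simp only [Q, Finset.mem_filter, Finset.mem_product, Finset.mem_range] at hp
    simp only [Prod.mk.injEq]
    repeat' apply And.intro
    all_goals first | trivial | omega

lemma ideal3_step {top v w : Fin 3 → ℤ} (h : cov3 v w) (hw : w ∈ ideal3 top) :
    v ∈ ideal3 top := by
  rcases hw with hw | hw
  · exact Or.inr (hw ▸ Relation.TransGen.single h)
  · exact Or.inr (Relation.TransGen.head h hw)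

lemma cov3_sum {n : ℕ} {v w : Fin 3 → ℤ} (h : cov3 v w)
    (hw : ∃ m : ℕ, w 0 + 2 * w 1 + 3 * w 2 + 3 * (m : ℤ) = n) :
    ∃ m : ℕ, v 0 + 2 * v 1 + 3 * v 2 + 3 * (m : ℤ) = n := by
  obtain ⟨hv, hw', x, hx, he⟩ := h
  obtain ⟨m, hm⟩ := hw
  have e0 := congrFun he 0
  have e1 := congrFun he 1
  have e2 := congrFun he 2
  simp only [Pi.add_apply] at e0 e1 e2
  simp only [X3, Set.mem_insert_iff, Set.mem_singleton_iff] at hx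
  rcases hx with rfl | rfl | rfl | rfl <;>
    simp only [Matrix.cons_val_zero, Matrix.cons_val_one, Matrix.head_cons,
      Matrix.cons_val_two, Matrix.tail_cons] at e0 e1 e2
  · exact ⟨m + 1, by push_cast; linarith⟩
  · exact ⟨m, by push_cast; linarith⟩
  · exact ⟨m, by push_cast; linarith⟩
  · exact ⟨m + 1, by push_cast; linarith⟩

lemma mem_ideal3_imp {n : ℕ} {v : Fin 3 → ℤ} (h : v ∈ ideal3 ![(n:ℤ), 0, 0]) :
    nonneg3 v ∧ ∃ m : ℕ, v 0 + 2 * v 1 + 3 * v 2 + 3 * (m : ℤ) = n := by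
  have htop : nonneg3 ![(n:ℤ), 0, 0] ∧
      ∃ m : ℕ, (![(n:ℤ), 0, 0]) 0 + 2 * (![(n:ℤ), 0, 0]) 1 + 3 * (![(n:ℤ), 0, 0]) 2
        + 3 * (m : ℤ) = n := by
    constructor
    · intro i; fin_cases i <;> simp
    · exact ⟨0, by simp⟩
  rcases h with h | h
  · exact h ▸ htop
  · induction h using Relation.TransGen.head_induction_on with
    | single h' => exact ⟨h'.1, cov3_sum h' htop.2⟩
    | head h' _ ih => exact ⟨h'.1, cov3_sum h' ih.2⟩

lemma nonneg3_nat (x y z : ℕ) : nonneg3 ![(x:ℤ), y, z] := by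
  intro i; fin_cases i <;> simp

lemma reach3 (n : ℕ) : ∀ k x y z m : ℕ, y + 2*z + 3*m = k → x + 2*y + 3*z + 3*m = n →
    (![(x:ℤ), y, z]) ∈ ideal3 ![(n:ℤ), 0, 0] := by
  intro k
  induction k using Nat.strong_induction_on with
  | _ k ih =>
    intro x y z m hk hn
    rcases z with _ | z'
    · rcases y with _ | y'
      · rcases m with _ | m'
        · have hx : x = n := by omega
          subst hx
          exact Or.inl (by norm_num)
        · refine ideal3_step ⟨nonneg3_nat x 0 0, nonneg3_nat x 0 1, ![0,0,-1], ?_, ?_⟩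
            (ih (2 + 3*m') (by omega) x 0 1 m' (by omega) (by omega))
          · simp [X3]
          · funext i; fin_cases i <;> simp [Pi.add_apply] <;> push_cast <;> ring
      · refine ideal3_step ⟨nonneg3_nat x (y'+1) 0, nonneg3_nat (x+2) y' 0, ![-2,1,0], ?_, ?_⟩
          (ih (y' + 3*m) (by omega) (x+2) y' 0 m (by omega) (by omega))
        · simp [X3]
        · funext i; fin_cases i <;> simp [Pi.add_apply] <;> push_cast <;> ring
    · refine ideal3_step ⟨nonneg3_nat x y (z'+1), nonneg3_nat (x+1) (y+1) z', ![-1,-1,1], ?_, ?_⟩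
        (ih (y + 1 + 2*z' + 3*m) (by omega) (x+1) (y+1) z' m (by omega) (by omega))
      · simp [X3]
      · funext i; fin_cases i <;> simp [Pi.add_apply] <;> push_cast <;> ring


lemma ideal3_eq (n : ℕ) : ideal3 ![(n : ℤ), 0, 0] =
    ↑((Q n).image (fun p => ![(p.1 : ℤ), p.2.1, p.2.2.1])) := by
  ext v
  simp only [Finset.coe_image, Set.mem_image, Finset.mem_coe, Q, Finset.mem_filter,
    Finset.mem_product, Finset.mem_range]
  constructor
  · intro hv
    obtain ⟨hnn, m, hm⟩ := mem_ideal3_imp hv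
    have h0 := hnn 0
    have h1 := hnn 1
    have h2 := hnn 2
    refine ⟨((v 0).toNat, (v 1).toNat, (v 2).toNat, m), ⟨⟨?_, ?_, ?_, ?_⟩, ?_⟩, ?_⟩ <;>
      dsimp only
    · omega
    · omega
    · omega
    · omega
    · omega
    · funext i; fin_cases i <;> simp <;> omega
  · rintro ⟨⟨x, y, z, m⟩, ⟨-, hs⟩, rfl⟩
    exact reach3 n (y + 2*z + 3*m) x y z m rfl hs

lemma C3_eq (n : ℕ) : C3 n = (Q n).card := by
  rw [C3, ideal3_eq, Set.ncard_coe_finset]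
  apply Finset.card_image_of_injOn
  intro p hp p' hp' he
  obtain ⟨x, y, z, m⟩ := p
  obtain ⟨x', y', z', m'⟩ := p'
  simp only [Q, Finset.mem_coe, Finset.mem_filter, Finset.mem_product, Finset.mem_range] at hp hp'

  have e0 := congrFun he 0
  have e1 := congrFun he 1
  have e2 := congrFun he 2
  simp only [Matrix.cons_val_zero, Matrix.cons_val_one, Matrix.head_cons,
    Matrix.cons_val_two, Matrix.tail_cons, Nat.cast_inj] at e0 e1 e2
  simp only [Prod.mk.injEq]
  omega


end Aux

open PowerSeries in
theorem stmt14 (n : ℕ) :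
    (C3 n : ℚ) = PowerSeries.coeff n
      ((1 + (X : ℚ⟦X⟧) ^ 2 + X ^ 3 + X ^ 5) *
        (1 - (X : ℚ⟦X⟧))⁻¹ * (1 - (X : ℚ⟦X⟧) ^ 3)⁻¹ * (1 - (X : ℚ⟦X⟧) ^ 4)⁻¹ *
        (1 - (X : ℚ⟦X⟧) ^ 6)⁻¹) := by
  rw [rhs_eq, coeff_q, C3_eq]
end

section
/- For d = 3 and n ≥ 0, C_n^{(3)} = ∑_{i ≥ 0} p_3(n - 3i), where p_3(m) is the number of partitions of m into at most 3 parts (with p_3(m) = 0 for m < 0). -/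
/-- `p_3(m)`: the number of partitions of `m` into at most three parts (0 for `m < 0`). -/
noncomputable def p3 (m : ℤ) : ℕ :=
  Set.ncard { p : ℕ × ℕ × ℕ |
    p.2.1 ≤ p.1 ∧ p.2.2 ≤ p.2.1 ∧ ((p.1 : ℤ) + p.2.1 + p.2.2) = m }

/-- weight -/
def f3 (v : Fin 3 → ℤ) : ℤ := v 0 + 2 * v 1 + 3 * v 2

lemma f3_add (v w : Fin 3 → ℤ) : f3 (v + w) = f3 v + f3 w := by
  simp [f3]; ring

lemma step_P {n : ℤ} {a b : Fin 3 → ℤ} (h : cov3 a b)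
    (hb : f3 b ≤ n ∧ (3:ℤ) ∣ (n - f3 b)) :
    nonneg3 a ∧ f3 a ≤ n ∧ (3:ℤ) ∣ (n - f3 a) := by
  obtain ⟨hna, _, x, hx, rfl⟩ := h
  refine ⟨hna, ?_⟩
  rw [f3_add]
  simp only [X3, Set.mem_insert_iff, Set.mem_singleton_iff] at hx
  obtain ⟨hb1, hb2⟩ := hb
  simp only [f3] at hb1 hb2 ⊢
  rcases hx with rfl|rfl|rfl|rfl <;> norm_num [Matrix.cons_val_two, Matrix.tail_cons, Matrix.head_cons] <;> omega

lemma prec_P {n : ℤ} {v w : Fin 3 → ℤ} (h : prec3 v w)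
    (hw : f3 w ≤ n ∧ (3:ℤ) ∣ (n - f3 w)) :
    nonneg3 v ∧ f3 v ≤ n ∧ (3:ℤ) ∣ (n - f3 v) := by
  induction h with
  | single h => exact step_P h hw
  | tail _ hc ih => exact ih (step_P hc hw).2

lemma forward {n : ℤ} (hn : 0 ≤ n) {v : Fin 3 → ℤ} (h : v ∈ ideal3 ![n, 0, 0]) :
    nonneg3 v ∧ f3 v ≤ n ∧ (3:ℤ) ∣ (n - f3 v) := by
  have htop : f3 ![n, 0, 0] = n := by norm_num [f3, Matrix.cons_val_two, Matrix.tail_cons, Matrix.head_cons]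
  rcases h with h | h
  · rcases h with rfl
    refine ⟨?_, by rw [htop], by rw [htop]; simp⟩
    intro i; fin_cases i <;> norm_num [hn]
  · exact prec_P h (by rw [htop]; simp)

lemma step_ideal {t v w : Fin 3 → ℤ} (hc : cov3 v w) (hw : w ∈ ideal3 t) :
    v ∈ ideal3 t := by
  rcases hw with h | h
  · rcases h with rfl
    exact Or.inr (Relation.TransGen.single hc)
  · exact Or.inr (Relation.TransGen.head hc h)

lemma backward_aux {n : ℤ} (hn : 0 ≤ n) :
    ∀ k : ℕ, ∀ v : Fin 3 → ℤ, nonneg3 v → f3 v ≤ n → (3:ℤ) ∣ (n - f3 v) →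
      (n - f3 v) + 2 * v 2 + v 1 ≤ (k : ℤ) → v ∈ ideal3 ![n, 0, 0] := by
  intro k
  induction k with
  | zero =>
      intro v hv hf hd hk
      have h0 := hv 0; have h1 := hv 1; have h2 := hv 2
      simp only [f3] at hf hd hk ⊢
      have hv1 : v 1 = 0 := by omega
      have hv2 : v 2 = 0 := by omega
      have hv0 : v 0 = n := by omega
      left
      funext i; fin_cases i <;> simp [hv0, hv1, hv2]
  | succ k ih =>
      intro v hv hf hd hk
      have h0 := hv 0; have h1 := hv 1; have h2 := hv 2
      by_cases hc2 : 1 ≤ v 2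
      · -- move up with x = (-1,-1,1)
        set w : Fin 3 → ℤ := ![v 0 + 1, v 1 + 1, v 2 - 1] with hwdef
        have hw0 : w 0 = v 0 + 1 := rfl
        have hw1 : w 1 = v 1 + 1 := rfl
        have hw2 : w 2 = v 2 - 1 := rfl
        have hfw : f3 w = f3 v := by simp only [f3, hw0, hw1, hw2]; ring
        have hwn : nonneg3 w := by
          intro i; fin_cases i <;> simp [hwdef] <;> omega
        have hwI : w ∈ ideal3 ![n, 0, 0] := by
          refine ih w hwn (by omega) (by omega) ?_
          rw [hfw, hw1, hw2]; omega
        refine step_ideal ⟨hv, hwn, ![-1,-1,1], by simp [X3], ?_⟩ hwI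
        funext i; fin_cases i <;>
          simp [hwdef, Pi.add_apply] <;> ring
      · by_cases hc1 : 1 ≤ v 1
        · -- move up with x = (-2,1,0)
          set w : Fin 3 → ℤ := ![v 0 + 2, v 1 - 1, v 2] with hwdef
          have hw0 : w 0 = v 0 + 2 := rfl
          have hw1 : w 1 = v 1 - 1 := rfl
          have hw2 : w 2 = v 2 := rfl
          have hfw : f3 w = f3 v := by simp only [f3, hw0, hw1, hw2]; ring
          have hwn : nonneg3 w := by
            intro i; fin_cases i <;> simp [hwdef] <;> omega
          have hwI : w ∈ ideal3 ![n, 0, 0] := by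
            refine ih w hwn (by omega) (by omega) ?_
            rw [hfw, hw1, hw2]; omega
          refine step_ideal ⟨hv, hwn, ![-2,1,0], by simp [X3], ?_⟩ hwI
          funext i; fin_cases i <;>
            simp [hwdef, Pi.add_apply] <;> ring
        · -- v 1 = 0, v 2 = 0
          have hv1 : v 1 = 0 := by omega
          have hv2 : v 2 = 0 := by omega
          by_cases hvt : v 0 = n
          · left; funext i; fin_cases i <;> simp [hvt, hv1, hv2]
          · -- move up with x = (0,0,-1)
            have hfv : f3 v = v 0 := by simp [f3, hv1, hv2]
            have hlt : v 0 + 3 ≤ n := by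
              rw [hfv] at hd hf; omega
            set w : Fin 3 → ℤ := ![v 0, 0, 1] with hwdef
            have hw0 : w 0 = v 0 := rfl
            have hw1 : w 1 = (0:ℤ) := rfl
            have hw2 : w 2 = (1:ℤ) := rfl
            have hfw : f3 w = v 0 + 3 := by simp [f3, hw0, hw1, hw2]
            have hwn : nonneg3 w := by
              intro i; fin_cases i <;> simp [hwdef] <;> omega
            have hwI : w ∈ ideal3 ![n, 0, 0] := by
              refine ih w hwn (by omega) (by rw [hfw]; rw [hfv] at hd; omega) ?_
              rw [hfw, hw1, hw2]; rw [hfv] at hk; omega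
            refine step_ideal ⟨hv, hwn, ![0,0,-1], by simp [X3], ?_⟩ hwI
            funext i; fin_cases i <;>
              simp [hwdef, Pi.add_apply, hv1, hv2]

lemma ideal_eq_s16 (n : ℕ) :
    ideal3 ![(n:ℤ), 0, 0] =
      {v : Fin 3 → ℤ | nonneg3 v ∧ f3 v ≤ (n:ℤ) ∧ (3:ℤ) ∣ ((n:ℤ) - f3 v)} := by
  ext v
  constructor
  · exact forward (by positivity)
  · rintro ⟨hv, hf, hd⟩
    exact backward_aux (by positivity) ((n:ℤ) - f3 v + 2 * v 2 + v 1).toNat v hv hf hd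
      (Int.self_le_toNat _)

def g3 (p : ℕ × ℕ × ℕ) : Fin 3 → ℤ :=
  ![(p.1 : ℤ) - p.2.1, (p.2.1 : ℤ) - p.2.2, (p.2.2 : ℤ)]

lemma g3_inj : Function.Injective g3 := by
  rintro ⟨x, y, z⟩ ⟨x', y', z'⟩ h
  have h0 := congrFun h 0
  have h1 := congrFun h 1
  have h2 := congrFun h 2
  simp only [g3, Matrix.cons_val_zero, Matrix.cons_val_one, Matrix.head_cons,
    Matrix.cons_val_two, Matrix.tail_cons] at h0 h1 h2
  have : z = z' := by exact_mod_cast h2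
  subst this
  have : y = y' := by omega
  subst this
  have : x = x' := by omega
  simp [this]

lemma f3_g3 (p : ℕ × ℕ × ℕ) : f3 (g3 p) = (p.1 : ℤ) + p.2.1 + p.2.2 := by
  simp [f3, g3]; ring

def Pfin (m : ℤ) : Finset (ℕ × ℕ × ℕ) :=
  (Finset.range (m.toNat + 1) ×ˢ Finset.range (m.toNat + 1) ×ˢ
      Finset.range (m.toNat + 1)).filter
    (fun p => p.2.1 ≤ p.1 ∧ p.2.2 ≤ p.2.1 ∧ ((p.1 : ℤ) + p.2.1 + p.2.2) = m)

lemma mem_Pfin {m : ℤ} {p : ℕ × ℕ × ℕ} :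
    p ∈ Pfin m ↔ p.2.1 ≤ p.1 ∧ p.2.2 ≤ p.2.1 ∧ ((p.1 : ℤ) + p.2.1 + p.2.2) = m := by
  obtain ⟨x, y, z⟩ := p
  simp only [Pfin, Finset.mem_filter, Finset.mem_product, Finset.mem_range]
  constructor
  · tauto
  · intro h; refine ⟨⟨?_, ?_, ?_⟩, h⟩ <;> omega

lemma p3_eq (m : ℤ) : p3 m = (Pfin m).card := by
  rw [p3, ← Set.ncard_coe_finset]
  congr 1
  ext p
  simp [mem_Pfin]

noncomputable def Sfin (n : ℕ) : Finset (Fin 3 → ℤ) :=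
  (Finset.Icc (0 : Fin 3 → ℤ) (fun _ => (n : ℤ))).filter
    (fun v => f3 v ≤ (n : ℤ) ∧ (3:ℤ) ∣ ((n : ℤ) - f3 v))

lemma mem_Sfin {n : ℕ} {v : Fin 3 → ℤ} :
    v ∈ Sfin n ↔ nonneg3 v ∧ f3 v ≤ (n : ℤ) ∧ (3:ℤ) ∣ ((n : ℤ) - f3 v) := by
  simp only [Sfin, Finset.mem_filter, Finset.mem_Icc, Pi.le_def, nonneg3]
  constructor
  · rintro ⟨⟨h1, _⟩, h⟩
    exact ⟨fun i => h1 i, h⟩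
  · rintro ⟨hv, hf, hd⟩
    refine ⟨⟨fun i => hv i, fun i => ?_⟩, hf, hd⟩
    have h0 := hv 0; have h1 := hv 1; have h2 := hv 2
    simp only [f3] at hf
    fin_cases i <;> simp <;> omega

lemma Sfin_eq_biUnion (n : ℕ) :
    Sfin n = (Finset.range (n + 1)).biUnion
      (fun i => (Pfin ((n : ℤ) - 3 * i)).image g3) := by
  ext v
  simp only [Finset.mem_biUnion, Finset.mem_range, Finset.mem_image, mem_Sfin]
  constructor
  · rintro ⟨hv, hf, j, hj⟩
    have h0 := hv 0; have h1 := hv 1; have h2 := hv 2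
    simp only [f3] at hj hf
    have e1 := Int.toNat_of_nonneg (show (0:ℤ) ≤ v 0 + v 1 + v 2 by omega)
    have e2 := Int.toNat_of_nonneg (show (0:ℤ) ≤ v 1 + v 2 by omega)
    have e3 := Int.toNat_of_nonneg (show (0:ℤ) ≤ v 2 by omega)
    have ej := Int.toNat_of_nonneg (show (0:ℤ) ≤ j by omega)
    refine ⟨j.toNat, by omega,
      ⟨(v 0 + v 1 + v 2).toNat, (v 1 + v 2).toNat, (v 2).toNat⟩, ?_, ?_⟩
    · rw [mem_Pfin]
      dsimp only
      refine ⟨by omega, by omega, ?_⟩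
      push_cast
      rw [e1, e2, e3, ej]
      omega
    · funext i
      fin_cases i <;> simp [g3, e1, e2, e3] <;> omega
  · rintro ⟨i, hi, p, hp, rfl⟩
    rw [mem_Pfin] at hp
    obtain ⟨hyx, hzy, hsum⟩ := hp
    have hfg := f3_g3 p
    refine ⟨?_, by omega, ⟨(i : ℤ), by omega⟩⟩
    intro j
    fin_cases j <;> simp [g3] <;> omega

theorem stmt16' (n : ℕ) :
    (Sfin n).card = ∑ i ∈ Finset.range (n + 1), p3 ((n : ℤ) - 3 * i) := by
  rw [Sfin_eq_biUnion, Finset.card_biUnion]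
  · refine Finset.sum_congr rfl fun i _ => ?_
    rw [Finset.card_image_of_injective _ g3_inj, p3_eq]
  · intro i hi j hj hij
    simp only [Finset.disjoint_left, Finset.mem_image]
    rintro v ⟨p, hp, rfl⟩ ⟨q, hq, hqv⟩
    rw [mem_Pfin] at hp hq
    have h1 := f3_g3 p
    have h2 := f3_g3 q
    rw [hqv] at h2
    simp only [Finset.mem_coe, Finset.coe_range, Set.mem_Iio, Finset.mem_range] at hi hj
    omega

theorem stmt16 (n : ℕ) :
    C3 n = ∑ i ∈ Finset.range (n + 1), p3 ((n : ℤ) - 3 * i) := by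
  have h : C3 n = (Sfin n).card := by
    rw [C3, ideal_eq_s16, ← Set.ncard_coe_finset]
    congr 1
    ext v
    simp [mem_Sfin]
  rw [h, stmt16']
end
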